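/- arXiv:2505.17805 — 2 statements merged into one kernel-verified Lean document; each statement's English description precedes it below -/
import Mathlib

section
/- Let W be the Weyl group of a root system Φ. Then W is isomorphic to the abstract group generated by symbols ω_α for α ∈ Φ, subject to the relations ω_α² = 1 and ω_α ω_β ω_α⁻¹ = ω_{ω_α(β)} for all α, β ∈ Φ, where ω_α(β) = β − ⟨β,α⟩α. -/
variable {V : Type*} [NormedAddCommGroup V] [InnerProductSpace ℝ V]

/-- The Cartan pairing `⟨β, α⟩ = 2(β,α)/(α,α)`. -/
noncomputable def pairingR (β α : V) : ℝ := 2 * (inner ℝ β α : ℝ) / (inner ℝ α α : ℝ)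

/-- The reflection in `α`, `v ↦ v − ⟨v,α⟩α` (junk value: the identity, if `α = 0`). -/
noncomputable def rfln (α : V) : V ≃ₗ[ℝ] V :=
  if h : (inner ℝ α α : ℝ) ≠ 0 then
    Module.reflection (f := (2 / (inner ℝ α α : ℝ)) • innerₛₗ ℝ α) (x := α)
      (by simp only [LinearMap.smul_apply, innerₛₗ_apply_apply, smul_eq_mul]; field_simp)
  else LinearEquiv.refl ℝ V

/-- `Φ` is a (reduced, crystallographic) root system. -/
structure IsRootSystem (Φ : Finset V) : Prop where
  ne_zero : ∀ α ∈ Φ, α ≠ 0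
  reduced : ∀ α ∈ Φ, ∀ t : ℝ, t • α ∈ Φ → t = 1 ∨ t = -1
  reflect : ∀ α ∈ Φ, ∀ β ∈ Φ, β - pairingR β α • α ∈ Φ
  crystal : ∀ α ∈ Φ, ∀ β ∈ Φ, ∃ n : ℤ, pairingR β α = (n : ℝ)

/-- `α` is a positive root with respect to the simple system `Δ`. -/
def IsPos (Φ Δ : Finset V) (α : V) : Prop :=
  α ∈ Φ ∧ ∃ c : V → ℝ, (∀ b, 0 ≤ c b) ∧ α = ∑ b ∈ Δ, c b • b

/-- `Δ` is a base (set of simple roots) for `Φ`. -/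
structure IsBase (Φ Δ : Finset V) : Prop where
  subset : Δ ⊆ Φ
  indep : LinearIndependent ℝ (fun b : ↥(Δ : Set V) => (b : V))
  pos_or_neg : ∀ α ∈ Φ, IsPos Φ Δ α ∨ IsPos Φ Δ (-α)

/-- The finset of positive roots. -/
noncomputable def posF (Φ Δ : Finset V) : Finset V :=
  @Finset.filter _ (IsPos Φ Δ) (Classical.decPred _) Φ

/-- The product of the reflections in the listed roots (the rightmost acts first). -/
noncomputable def wprod (l : List V) : V ≃ₗ[ℝ] V := (l.map rfln).prod


lemma rfln_apply (α v : V) : rfln α v = v - pairingR v α • α := by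
  unfold rfln
  split_ifs with h
  · rw [Module.reflection_apply]
    simp only [LinearMap.smul_apply, innerₛₗ_apply_apply, smul_eq_mul, pairingR]
    congr 2
    rw [real_inner_comm α v]
    ring
  · push_neg at h
    have : α = 0 := by rwa [inner_self_eq_zero] at h
    simp [this, pairingR, LinearEquiv.refl_apply]

lemma pairingR_self (α : V) (h : α ≠ 0) : pairingR α α = 2 := by
  have h2 : (inner ℝ α α : ℝ) ≠ 0 := by rwa [inner_self_ne_zero]
  unfold pairingR; field_simp

lemma rfln_self (α : V) : rfln α α = -α := by
  rcases eq_or_ne α 0 with h | h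
  · simp [h, rfln_apply, pairingR]
  · rw [rfln_apply, pairingR_self α h, two_smul]; abel

lemma lmul_apply (e f : V ≃ₗ[ℝ] V) (v : V) : (e * f) v = e (f v) := rfl

lemma linv_apply (e : V ≃ₗ[ℝ] V) (v : V) : e⁻¹ v = e.symm v := rfl

lemma rfln_inner (α u v : V) : (inner ℝ (rfln α u) (rfln α v) : ℝ) = inner ℝ u v := by
  rw [rfln_apply, rfln_apply]
  rcases eq_or_ne α 0 with h | h
  · simp [h, pairingR]
  · have h2 : (inner ℝ α α : ℝ) ≠ 0 := by rwa [inner_self_ne_zero]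
    rw [inner_sub_left, inner_sub_right, inner_sub_right, real_inner_smul_left,
      real_inner_smul_left, real_inner_smul_right, real_inner_smul_right]
    simp only [pairingR]
    rw [real_inner_comm v α, real_inner_comm α u]
    field_simp
    ring

lemma rfln_invol (α : V) (v : V) : rfln α (rfln α v) = v := by
  rw [rfln_apply, rfln_apply]
  rcases eq_or_ne α 0 with h | h
  · simp [h, pairingR]
  · have h2 : (inner ℝ α α : ℝ) ≠ 0 := by rwa [inner_self_ne_zero]
    simp only [pairingR, inner_sub_left, real_inner_smul_left]
    have : 2 * ((inner ℝ v α : ℝ) - 2 * inner ℝ v α / inner ℝ α α * inner ℝ α α) / inner ℝ α α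
        = - (2 * inner ℝ v α / inner ℝ α α) := by field_simp; ring
    rw [this]
    simp only [neg_smul, sub_neg_eq_add, sub_add_cancel]

lemma rfln_mul_self (α : V) : rfln α * rfln α = 1 := by
  ext v
  exact rfln_invol α v

lemma rfln_inv (α : V) : (rfln α)⁻¹ = rfln α :=
  (eq_inv_of_mul_eq_one_left (rfln_mul_self α)).symm

@[simp] lemma wprod_nil : wprod ([] : List V) = 1 := rfl

lemma wprod_cons (a : V) (l : List V) : wprod (a :: l) = rfln a * wprod l := by
  simp [wprod]

lemma wprod_append (l l' : List V) : wprod (l ++ l') = wprod l * wprod l' := by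
  simp [wprod]

lemma wprod_inner (l : List V) (u v : V) :
    (inner ℝ (wprod l u) (wprod l v) : ℝ) = inner ℝ u v := by
  induction l with
  | nil => rfl
  | cons a l ih =>
    rw [wprod_cons]
    simp only [lmul_apply]
    rw [rfln_inner, ih]

lemma rfln_conj (l : List V) (β : V) :
    rfln (wprod l β) = wprod l * rfln β * (wprod l)⁻¹ := by
  ext v
  simp only [lmul_apply]
  rw [rfln_apply, rfln_apply]
  have happ : wprod l ((wprod l)⁻¹ v) = v := by
    rw [linv_apply, LinearEquiv.apply_symm_apply]
  have h1 : pairingR ((wprod l)⁻¹ v) β = pairingR v (wprod l β) := by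
    unfold pairingR
    rw [← wprod_inner l ((wprod l)⁻¹ v) β, happ, wprod_inner]
  rw [map_sub, map_smul, happ, h1]


lemma inner_self_pos' {x : V} (h : x ≠ 0) : (0:ℝ) < inner ℝ x x :=
  lt_of_le_of_ne real_inner_self_nonneg (fun h0 => h (inner_self_eq_zero.mp h0.symm))

lemma exists_regular (A : Finset V) (hA : ∀ α ∈ A, α ≠ 0) :
    ∃ f : V, ∀ α ∈ A, (inner ℝ f α : ℝ) ≠ 0 := by
  classical
  induction A using Finset.induction_on with
  | empty => exact ⟨0, by simp⟩
  | @insert α A hαA ih =>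
    obtain ⟨f, hf⟩ := ih (fun β hβ => hA β (Finset.mem_insert_of_mem hβ))
    obtain ⟨ε, hε⟩ := Infinite.exists_notMem_finset
      ((insert α A).image (fun β => - (inner ℝ f β : ℝ) / (inner ℝ α β : ℝ)))
    refine ⟨f + ε • α, fun β hβ => ?_⟩
    rw [inner_add_left, real_inner_smul_left]
    intro hcon
    rcases eq_or_ne (inner ℝ α β : ℝ) 0 with h0 | h0
    · rw [h0, mul_zero, add_zero] at hcon
      rcases Finset.mem_insert.mp hβ with rfl | hβ'
      · exact hA β (Finset.mem_insert_self β A) (inner_self_eq_zero.mp h0)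
      · exact hf β hβ' hcon
    · apply hε
      apply Finset.mem_image.mpr
      refine ⟨β, hβ, ?_⟩
      field_simp
      linarith [hcon]

section RS

variable {Φ : Finset V} (hΦ : IsRootSystem Φ)

lemma neg_mem (hΦ : IsRootSystem Φ) {α : V} (hα : α ∈ Φ) : -α ∈ Φ := by
  have := hΦ.reflect α hα α hα
  rwa [pairingR_self α (hΦ.ne_zero α hα), two_smul, show α - (α + α) = -α by abel] at this

lemma rfln_mem (hΦ : IsRootSystem Φ) {α β : V} (hα : α ∈ Φ) (hβ : β ∈ Φ) : rfln α β ∈ Φ := by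
  rw [rfln_apply]; exact hΦ.reflect α hα β hβ

/-- If `α, β` are non-proportional roots with positive inner ℝ product, `α - β` is a root. -/
lemma sub_root_mem (hΦ : IsRootSystem Φ) {α β : V} (hα : α ∈ Φ) (hβ : β ∈ Φ)
    (hne : β ≠ α) (hne' : β ≠ -α) (hp : 0 < (inner ℝ α β : ℝ)) : α - β ∈ Φ := by
  have hα0 : α ≠ 0 := hΦ.ne_zero α hα
  have hβ0 : β ≠ 0 := hΦ.ne_zero β hβ
  have hαα : (0:ℝ) < inner ℝ α α := inner_self_pos' hα0
  have hββ : (0:ℝ) < inner ℝ β β := inner_self_pos' hβ0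
  -- non-proportional
  have hnp : ∀ t : ℝ, β ≠ t • α := by
    intro t ht
    rcases hΦ.reduced α hα t (ht ▸ hβ) with rfl | rfl
    · rw [one_smul] at ht; exact hne ht
    · rw [neg_one_smul] at ht; exact hne' ht
  -- strict Cauchy-Schwarz
  have hcs : (inner ℝ α β : ℝ) * inner ℝ α β < inner ℝ α α * inner ℝ β β := by
    set u : V := (inner ℝ α α : ℝ) • β - (inner ℝ α β : ℝ) • α with hu
    have hu0 : u ≠ 0 := by
      intro h
      apply hnp ((inner ℝ α β : ℝ) / (inner ℝ α α : ℝ))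
      rw [sub_eq_zero] at h
      have h' := congrArg (fun v : V => ((inner ℝ α α : ℝ))⁻¹ • v) h
      simp only [smul_smul, inv_mul_cancel₀ hαα.ne', one_smul] at h'
      exact h'.trans (by rw [div_eq_inv_mul])
    have huu : (0:ℝ) < inner ℝ u u := inner_self_pos' hu0
    rw [hu] at huu
    rw [inner_sub_left, inner_sub_right, inner_sub_right, real_inner_smul_left,
      real_inner_smul_left, real_inner_smul_left, real_inner_smul_left,
      real_inner_smul_right, real_inner_smul_right, real_inner_smul_right,
      real_inner_smul_right] at huu
    rw [real_inner_comm α β] at huu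
    nlinarith [hαα, hββ]
  obtain ⟨n, hn⟩ := hΦ.crystal α hα β hβ
  obtain ⟨m, hm⟩ := hΦ.crystal β hβ α hα
  have hip : (inner ℝ β α : ℝ) = inner ℝ α β := real_inner_comm α β
  have hnpos : (0:ℝ) < n := by
    rw [← hn]; unfold pairingR; rw [hip]; positivity
  have hmpos : (0:ℝ) < m := by
    rw [← hm]; unfold pairingR; positivity
  have hprod : (n : ℝ) * m < 4 := by
    rw [← hn, ← hm]; unfold pairingR; rw [hip]
    rw [div_mul_div_comm]
    rw [div_lt_iff₀ (by positivity)]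
    nlinarith [hcs]
  have hn1 : (1:ℤ) ≤ n := by exact_mod_cast hnpos
  have hm1 : (1:ℤ) ≤ m := by exact_mod_cast hmpos
  have : n = 1 ∨ m = 1 := by
    by_contra hc
    push_neg at hc
    have : (2:ℤ) ≤ n := by omega
    have : (2:ℤ) ≤ m := by omega
    have : (4:ℝ) ≤ (n:ℝ) * m := by
      have : (4:ℤ) ≤ n * m := by nlinarith
      exact_mod_cast this
    linarith
  rcases this with h1 | h1
  · -- pairingR β α = 1, so s_α β = β - α ∈ Φ, negate
    have := hΦ.reflect α hα β hβ
    rw [hn, h1] at this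
    push_cast at this
    rw [one_smul] at this
    have := neg_mem hΦ this
    rwa [neg_sub] at this
  · have := hΦ.reflect β hβ α hα
    rwa [hm, h1, Int.cast_one, one_smul] at this

noncomputable def PosR (Φ : Finset V) (f : V) : Finset V :=
  @Finset.filter _ (fun α => 0 < (inner ℝ f α : ℝ)) (Classical.decPred _) Φ

noncomputable def DeltaF (Φ : Finset V) (f : V) : Finset V :=
  @Finset.filter _ (fun α => ¬ ∃ β ∈ PosR Φ f, ∃ γ ∈ PosR Φ f, α = β + γ)
    (Classical.decPred _) (PosR Φ f)

def IsCombo (Φ : Finset V) (f : V) (α : V) : Prop :=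
  ∃ c : V → ℝ, (∀ b, 0 ≤ c b) ∧ α = ∑ b ∈ DeltaF Φ f, c b • b

variable {f : V}

lemma mem_PosR {α : V} : α ∈ PosR Φ f ↔ α ∈ Φ ∧ 0 < (inner ℝ f α : ℝ) := by
  unfold PosR; exact Finset.mem_filter

lemma PosR_subset : PosR Φ f ⊆ Φ := fun α hα => (mem_PosR.mp hα).1

lemma mem_DeltaF {α : V} :
    α ∈ DeltaF Φ f ↔ α ∈ PosR Φ f ∧ ¬ ∃ β ∈ PosR Φ f, ∃ γ ∈ PosR Φ f, α = β + γ := by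
  unfold DeltaF; exact @Finset.mem_filter _ _ (Classical.decPred _) _ _

lemma DeltaF_subset : DeltaF Φ f ⊆ PosR Φ f := fun α hα => (mem_DeltaF.mp hα).1

lemma pos_or_neg_mem (hf : ∀ α ∈ Φ, (inner ℝ f α : ℝ) ≠ 0) (hΦ : IsRootSystem Φ) {α : V}
    (hα : α ∈ Φ) : α ∈ PosR Φ f ∨ -α ∈ PosR Φ f := by
  rcases lt_or_gt_of_ne (hf α hα) with h | h
  · right
    exact mem_PosR.mpr ⟨neg_mem hΦ hα, by rw [inner_neg_right]; linarith⟩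
  · left
    exact mem_PosR.mpr ⟨hα, h⟩

lemma not_both_pos {α : V} (hα : α ∈ PosR Φ f) : -α ∉ PosR Φ f := by
  intro h
  have h1 := (mem_PosR.mp hα).2
  have h2 := (mem_PosR.mp h).2
  rw [inner_neg_right] at h2
  linarith

lemma combo_add {α β : V} (hα : IsCombo Φ f α) (hβ : IsCombo Φ f β) :
    IsCombo Φ f (α + β) := by
  obtain ⟨c, hc, hc'⟩ := hα
  obtain ⟨d, hd, hd'⟩ := hβ
  refine ⟨fun b => c b + d b, fun b => add_nonneg (hc b) (hd b), ?_⟩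
  rw [hc', hd', ← Finset.sum_add_distrib]
  congr 1; ext b; rw [add_smul]

lemma delta_combo {b : V} (hb : b ∈ DeltaF Φ f) : IsCombo Φ f b := by
  classical
  refine ⟨fun x => if x = b then 1 else 0, fun x => by positivity, ?_⟩
  symm
  simp only [ite_smul, one_smul, zero_smul]
  rw [Finset.sum_ite_eq' (DeltaF Φ f) b (fun x => x), if_pos hb]

noncomputable def msr (Φ : Finset V) (f α : V) : ℕ :=
  (@Finset.filter _ (fun γ => (inner ℝ f γ : ℝ) < inner ℝ f α) (Classical.decPred _) (PosR Φ f)).card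

lemma msr_lt {α β : V} (hβ : β ∈ PosR Φ f) (hlt : (inner ℝ f β : ℝ) < inner ℝ f α) :
    msr Φ f β < msr Φ f α := by
  apply Finset.card_lt_card
  constructor
  · intro γ hγ
    have h := Finset.mem_filter.mp hγ
    exact Finset.mem_filter.mpr ⟨h.1, lt_trans h.2 hlt⟩
  · intro hsub
    have : β ∈ @Finset.filter _ (fun γ => (inner ℝ f γ : ℝ) < inner ℝ f α)
        (Classical.decPred _) (PosR Φ f) := Finset.mem_filter.mpr ⟨hβ, hlt⟩
    have := Finset.mem_filter.mp (hsub this)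
    exact lt_irrefl _ this.2

lemma pos_combo (hΦ : IsRootSystem Φ) : ∀ n (α : V), α ∈ PosR Φ f → msr Φ f α = n →
    IsCombo Φ f α := by
  intro n
  induction n using Nat.strong_induction_on with
  | _ n ih =>
    intro α hα hn
    by_cases hd : α ∈ DeltaF Φ f
    · exact delta_combo hd
    · have hdec : ∃ β ∈ PosR Φ f, ∃ γ ∈ PosR Φ f, α = β + γ := by
        by_contra hc
        exact hd (mem_DeltaF.mpr ⟨hα, hc⟩)
      obtain ⟨β, hβ, γ, hγ, hsum⟩ := hdec
      have hfα : (inner ℝ f α : ℝ) = inner ℝ f β + inner ℝ f γ := by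
        rw [hsum, inner_add_right]
      have hβlt : (inner ℝ f β : ℝ) < inner ℝ f α := by
        have := (mem_PosR.mp hγ).2; linarith
      have hγlt : (inner ℝ f γ : ℝ) < inner ℝ f α := by
        have := (mem_PosR.mp hβ).2; linarith
      have h1 := ih _ (hn ▸ msr_lt hβ hβlt) β hβ rfl
      have h2 := ih _ (hn ▸ msr_lt hγ hγlt) γ hγ rfl
      exact hsum ▸ combo_add h1 h2

lemma delta_inner_nonpos (hf : ∀ α ∈ Φ, (inner ℝ f α : ℝ) ≠ 0) (hΦ : IsRootSystem Φ) {b b' : V}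
    (hb : b ∈ DeltaF Φ f) (hb' : b' ∈ DeltaF Φ f) (hne : b ≠ b') :
    (inner ℝ b b' : ℝ) ≤ 0 := by
  by_contra hc
  push_neg at hc
  have hbP := DeltaF_subset hb
  have hb'P := DeltaF_subset hb'
  have hbΦ := PosR_subset hbP
  have hb'Φ := PosR_subset hb'P
  have hne2 : b' ≠ -b := by
    intro h
    exact not_both_pos hbP (h ▸ hb'P)
  have hδ : b - b' ∈ Φ := sub_root_mem hΦ hbΦ hb'Φ (Ne.symm hne) hne2 hc
  rcases pos_or_neg_mem hf hΦ hδ with h | h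
  · have : ∃ β ∈ PosR Φ f, ∃ γ ∈ PosR Φ f, b = β + γ :=
      ⟨b - b', h, b', hb'P, by abel⟩
    exact (mem_DeltaF.mp hb).2 this
  · rw [neg_sub] at h
    have : ∃ β ∈ PosR Φ f, ∃ γ ∈ PosR Φ f, b' = β + γ :=
      ⟨b' - b, h, b, hbP, by abel⟩
    exact (mem_DeltaF.mp hb').2 this

lemma delta_indep (hf : ∀ α ∈ Φ, (inner ℝ f α : ℝ) ≠ 0) (hΦ : IsRootSystem Φ) (t : V → ℝ)
    (ht : ∑ b ∈ DeltaF Φ f, t b • b = 0) : ∀ b ∈ DeltaF Φ f, t b = 0 := by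
  classical
  set Δ := DeltaF Φ f with hΔ
  set P := Δ.filter (fun b => 0 ≤ t b) with hP
  set N := Δ.filter (fun b => ¬ 0 ≤ t b) with hN
  set v : V := ∑ b ∈ P, t b • b with hv
  set w : V := ∑ b ∈ N, (-(t b)) • b with hw
  have hvw : v = w := by
    have h1 : v + ∑ b ∈ N, t b • b = 0 := by
      rw [hv, hP, hN, Finset.sum_filter_add_sum_filter_not]; exact ht
    have h2 : ∑ b ∈ N, (-(t b)) • b = - ∑ b ∈ N, t b • b := by
      rw [← Finset.sum_neg_distrib]
      exact Finset.sum_congr rfl (fun b _ => neg_smul _ _)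
    rw [hw, h2, eq_neg_iff_add_eq_zero]
    exact h1
  have hfb : ∀ b ∈ Δ, (0:ℝ) < inner ℝ f b := fun b hb => (mem_PosR.mp (DeltaF_subset hb)).2
  have hterm : ∀ b ∈ P, ∀ b' ∈ N, t b * -(t b') * (inner ℝ b b' : ℝ) ≤ 0 := by
    intro b hb b' hb'
    have h1 : 0 ≤ t b := (Finset.mem_filter.mp hb).2
    have h2 : t b' < 0 := lt_of_not_ge (Finset.mem_filter.mp hb').2
    have hne : b ≠ b' := by
      intro h; subst h
      exact (Finset.mem_filter.mp hb').2 h1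
    have h3 : (inner ℝ b b' : ℝ) ≤ 0 :=
      delta_inner_nonpos hf hΦ (Finset.mem_filter.mp hb).1 (Finset.mem_filter.mp hb').1 hne
    have : 0 ≤ t b * -(t b') := mul_nonneg h1 (by linarith)
    exact mul_nonpos_of_nonneg_of_nonpos this h3
  have hvv : (inner ℝ v v : ℝ) ≤ 0 := by
    calc (inner ℝ v v : ℝ) = inner ℝ v w := by rw [hvw]
    _ = ∑ b ∈ P, ∑ b' ∈ N, t b * -(t b') * (inner ℝ b b' : ℝ) := by
        rw [hv, hw, sum_inner]
        refine Finset.sum_congr rfl (fun b hb => ?_)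
        rw [real_inner_smul_left, inner_sum]
        rw [Finset.mul_sum]
        refine Finset.sum_congr rfl (fun b' hb' => ?_)
        rw [real_inner_smul_right]; ring
    _ ≤ 0 := Finset.sum_nonpos (fun b hb => Finset.sum_nonpos (fun b' hb' => hterm b hb b' hb'))
  have hv0 : v = 0 := by
    rw [← inner_self_eq_zero (𝕜 := ℝ)]
    exact le_antisymm hvv real_inner_self_nonneg
  have hw0 : w = 0 := hvw ▸ hv0
  have hPzero : ∀ b ∈ P, t b = 0 := by
    have hfv : ∑ b ∈ P, t b * (inner ℝ f b : ℝ) = 0 := by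
      have : (inner ℝ f v : ℝ) = ∑ b ∈ P, t b * (inner ℝ f b : ℝ) := by
        rw [hv, inner_sum]
        exact Finset.sum_congr rfl (fun b _ => real_inner_smul_right _ _ _)
      rw [← this, hv0, inner_zero_right]
    intro b hb
    have hall := (Finset.sum_eq_zero_iff_of_nonneg (fun b hb => mul_nonneg
      (Finset.mem_filter.mp hb).2 (hfb b (Finset.mem_filter.mp hb).1).le)).mp hfv b hb
    have := hfb b (Finset.mem_filter.mp hb).1
    rcases mul_eq_zero.mp hall with h | h
    · exact h
    · exact absurd h this.ne'
  have hNzero : ∀ b ∈ N, False := by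
    have hfw : ∑ b ∈ N, -(t b) * (inner ℝ f b : ℝ) = 0 := by
      have : (inner ℝ f w : ℝ) = ∑ b ∈ N, -(t b) * (inner ℝ f b : ℝ) := by
        rw [hw, inner_sum]
        exact Finset.sum_congr rfl (fun b _ => real_inner_smul_right _ _ _)
      rw [← this, hw0, inner_zero_right]
    intro b hb
    have hall := (Finset.sum_eq_zero_iff_of_nonneg (fun b hb => mul_nonneg
      (by linarith [lt_of_not_ge (Finset.mem_filter.mp hb).2])
      (hfb b (Finset.mem_filter.mp hb).1).le)).mp hfw b hb
    have h2 : t b < 0 := lt_of_not_ge (Finset.mem_filter.mp hb).2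
    have := hfb b (Finset.mem_filter.mp hb).1
    rcases mul_eq_zero.mp hall with h | h
    · linarith
    · exact absurd h this.ne'
  intro b hb
  by_cases h : 0 ≤ t b
  · exact hPzero b (Finset.mem_filter.mpr ⟨hb, h⟩)
  · exact absurd (Finset.mem_filter.mpr ⟨hb, h⟩) (fun hmem => hNzero b hmem)

lemma combo_pos (hf : ∀ α ∈ Φ, (inner ℝ f α : ℝ) ≠ 0) {α : V} (hα : α ∈ Φ)
    (hc : IsCombo Φ f α) : α ∈ PosR Φ f := by
  obtain ⟨c, hc0, hcs⟩ := hc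
  refine mem_PosR.mpr ⟨hα, ?_⟩
  have h1 : (inner ℝ f α : ℝ) = ∑ b ∈ DeltaF Φ f, c b * inner ℝ f b := by
    rw [hcs, inner_sum]
    exact Finset.sum_congr rfl (fun b _ => real_inner_smul_right _ _ _)
  have h2 : (0:ℝ) ≤ inner ℝ f α := by
    rw [h1]
    exact Finset.sum_nonneg (fun b hb => mul_nonneg (hc0 b)
      (le_of_lt (mem_PosR.mp (DeltaF_subset hb)).2))
  exact lt_of_le_of_ne h2 (Ne.symm (hf α hα))

lemma simple_reflect_pos (hf : ∀ α ∈ Φ, (inner ℝ f α : ℝ) ≠ 0) (hΦ : IsRootSystem Φ) {c β : V}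
    (hc : c ∈ DeltaF Φ f) (hβ : β ∈ PosR Φ f) (hne : β ≠ c) : rfln c β ∈ PosR Φ f := by
  classical
  have hcP := DeltaF_subset hc
  have hcΦ := PosR_subset hcP
  have hβΦ := PosR_subset hβ
  set m : ℝ := pairingR β c with hm
  have hδΦ : rfln c β ∈ Φ := rfln_mem hΦ hcΦ hβΦ
  by_contra hcon
  rcases pos_or_neg_mem hf hΦ hδΦ with h | h
  · exact hcon h
  obtain ⟨k, hk0, hks⟩ := pos_combo hΦ (msr Φ f β) β hβ rfl
  obtain ⟨e, he0, hes⟩ := pos_combo hΦ (msr Φ f (-(rfln c β))) _ h rfl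
  have hsum : ∑ b ∈ DeltaF Φ f, (k b + e b) • b = m • c := by
    rw [Finset.sum_congr rfl (fun b _ => add_smul (k b) (e b) b), Finset.sum_add_distrib,
      ← hks, ← hes]
    rw [rfln_apply, ← hm]
    abel
  have hite : ∑ b ∈ DeltaF Φ f, (if b = c then m else 0) • b = m • c := by
    simp only [ite_smul, zero_smul]
    rw [Finset.sum_ite_eq' (DeltaF Φ f) c (fun x => m • x), if_pos hc]
  have hzero : ∀ b ∈ DeltaF Φ f, k b + e b - (if b = c then m else 0) = 0 := by
    apply delta_indep hf hΦ
    rw [Finset.sum_congr rfl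
      (fun b _ => sub_smul (k b + e b) (if b = c then m else 0) b),
      Finset.sum_sub_distrib, hsum, hite, sub_self]
  have hkb : ∀ b ∈ DeltaF Φ f, b ≠ c → k b = 0 := by
    intro b hb hbc
    have := hzero b hb
    rw [if_neg hbc, sub_zero] at this
    have h1 := hk0 b
    have h2 := he0 b
    linarith
  have hβc : β = k c • c := by
    rw [hks]
    rw [Finset.sum_eq_single c (fun b hb hbc => by rw [hkb b hb hbc, zero_smul])
      (fun hcc => absurd hc hcc)]
  have := hΦ.reduced c hcΦ (k c) (hβc ▸ hβΦ)
  rcases this with h1 | h1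
  · rw [h1, one_smul] at hβc
    exact hne hβc
  · rw [h1, neg_one_smul] at hβc
    exact not_both_pos hcP (hβc ▸ hβ)

lemma exists_conj_simple (hf : ∀ α ∈ Φ, (inner ℝ f α : ℝ) ≠ 0) (hΦ : IsRootSystem Φ) :
    ∀ n (α : V), α ∈ PosR Φ f → msr Φ f α = n →
    ∃ l : List V, (∀ x ∈ l, x ∈ DeltaF Φ f) ∧ ∃ b ∈ DeltaF Φ f, wprod l b = α := by
  intro n
  induction n using Nat.strong_induction_on with
  | _ n ih =>
    intro α hα hn
    by_cases hd : α ∈ DeltaF Φ f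
    · exact ⟨[], by simp, α, hd, rfl⟩
    · have hαΦ := PosR_subset hα
      have hα0 := hΦ.ne_zero α hαΦ
      obtain ⟨k, hk0, hks⟩ := pos_combo hΦ (msr Φ f α) α hα rfl
      -- find a simple root with positive inner ℝ product with α
      have hex : ∃ b ∈ DeltaF Φ f, 0 < (inner ℝ α b : ℝ) := by
        by_contra hcon
        push_neg at hcon
        have h1 : (inner ℝ α α : ℝ) = ∑ b ∈ DeltaF Φ f, k b * inner ℝ α b := by
          conv_lhs => rw [show (inner ℝ α α : ℝ) = inner ℝ α α from rfl]
          nth_rewrite 2 [hks]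
          rw [inner_sum]
          exact Finset.sum_congr rfl (fun b _ => real_inner_smul_right _ _ _)
        have h2 : (inner ℝ α α : ℝ) ≤ 0 := by
          rw [h1]
          exact Finset.sum_nonpos (fun b hb =>
            mul_nonpos_of_nonneg_of_nonpos (hk0 b) (hcon b hb))
        exact absurd h2 (not_le.mpr (inner_self_pos' hα0))
      obtain ⟨b, hb, hab⟩ := hex
      have hbP := DeltaF_subset hb
      have hbΦ := PosR_subset hbP
      have hne : α ≠ b := fun h => hd (h ▸ hb)
      have hδP : rfln b α ∈ PosR Φ f := simple_reflect_pos hf hΦ hb hα hne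
      have hpr : 0 < pairingR α b := by
        unfold pairingR
        have := inner_self_pos' (hΦ.ne_zero b hbΦ)
        positivity
      have hlt : (inner ℝ f (rfln b α) : ℝ) < inner ℝ f α := by
        rw [rfln_apply, inner_sub_right, real_inner_smul_right]
        have := (mem_PosR.mp hbP).2
        nlinarith
      obtain ⟨l, hl, b', hb', hwp⟩ := ih _ (hn ▸ msr_lt hδP hlt) _ hδP rfl
      refine ⟨b :: l, ?_, b', hb', ?_⟩
      · intro x hx
        rcases List.mem_cons.mp hx with rfl | hx
        · exact hb
        · exact hl x hx
      · rw [wprod_cons, lmul_apply, hwp, rfln_invol]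

end RS

section Pres

variable (Φ : Finset V)

/-- The relator set. -/
def Wrels (hmem : ∀ a b : {x // x ∈ Φ}, rfln (a : V) (b : V) ∈ Φ) :
    Set (FreeGroup {x // x ∈ Φ}) :=
  ({w : FreeGroup {x // x ∈ Φ} | ∃ a : {x // x ∈ Φ}, w = (FreeGroup.of a) ^ 2} ∪
   {w : FreeGroup {x // x ∈ Φ} | ∃ a b : {x // x ∈ Φ},
     w = FreeGroup.of a * FreeGroup.of b * (FreeGroup.of a)⁻¹ *
       (FreeGroup.of (⟨rfln (a : V) (b : V), hmem a b⟩ : {x // x ∈ Φ}))⁻¹})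

variable {Φ} (hmem : ∀ a b : {x // x ∈ Φ}, rfln (a : V) (b : V) ∈ Φ)

lemma rfln_conj_single (α β : V) : rfln (rfln α β) = rfln α * rfln β * (rfln α)⁻¹ := by
  have h := rfln_conj [α] β
  have h1 : wprod [α] = rfln α := by simp [wprod]
  rw [h1] at h
  exact h

lemma lift_rels_eq_one : ∀ r ∈ Wrels Φ hmem,
    FreeGroup.lift (fun a : {x // x ∈ Φ} => rfln (a : V)) r = 1 := by
  rintro r (⟨a, rfl⟩ | ⟨a, b, rfl⟩)
  · rw [map_pow, FreeGroup.lift_apply_of, pow_two, rfln_mul_self]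
  · simp only [map_mul, map_inv, FreeGroup.lift_apply_of]
    rw [← rfln_conj_single]
    group

/-- The canonical map from the presented group to the linear automorphisms. -/
noncomputable def piW : PresentedGroup (Wrels Φ hmem) →* (V ≃ₗ[ℝ] V) :=
  PresentedGroup.toGroup (lift_rels_eq_one hmem)

lemma piW_of (a : {x // x ∈ Φ}) : piW hmem (PresentedGroup.of a) = rfln (a : V) :=
  PresentedGroup.toGroup.of _

lemma rel_eq_one {r : FreeGroup {x // x ∈ Φ}} (hr : r ∈ Wrels Φ hmem) :
    PresentedGroup.mk (Wrels Φ hmem) r = 1 :=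
  (QuotientGroup.eq_one_iff r).mpr (Subgroup.subset_normalClosure hr)

lemma gsq (a : {x // x ∈ Φ}) :
    (PresentedGroup.of (rels := Wrels Φ hmem) a) * PresentedGroup.of a = 1 := by
  have := rel_eq_one hmem (Or.inl ⟨a, rfl⟩)
  rw [map_pow] at this
  rw [← pow_two]
  exact this

lemma ginv (a : {x // x ∈ Φ}) :
    (PresentedGroup.of (rels := Wrels Φ hmem) a)⁻¹ = PresentedGroup.of a :=
  inv_eq_of_mul_eq_one_right (gsq hmem a)

lemma gconj (a b : {x // x ∈ Φ}) :
    PresentedGroup.of (rels := Wrels Φ hmem) a * PresentedGroup.of b *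
      (PresentedGroup.of a)⁻¹ =
    PresentedGroup.of (⟨rfln (a : V) (b : V), hmem a b⟩ : {x // x ∈ Φ}) := by
  have := rel_eq_one hmem (Or.inr ⟨a, b, rfl⟩)
  simp only [map_mul, map_inv] at this
  rw [mul_inv_eq_one] at this
  exact this

/-- Product of generators over a list. -/
noncomputable def gword (l : List {x // x ∈ Φ}) : PresentedGroup (Wrels Φ hmem) :=
  (l.map PresentedGroup.of).prod

lemma gword_nil : gword hmem [] = 1 := rfl

lemma gword_cons (a : {x // x ∈ Φ}) (l : List {x // x ∈ Φ}) :
    gword hmem (a :: l) = PresentedGroup.of a * gword hmem l := by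
  simp [gword]

lemma gword_append (l l' : List {x // x ∈ Φ}) :
    gword hmem (l ++ l') = gword hmem l * gword hmem l' := by
  simp [gword]

lemma gword_singleton (a : {x // x ∈ Φ}) : gword hmem [a] = PresentedGroup.of a := by
  simp [gword]

lemma piW_gword (l : List {x // x ∈ Φ}) :
    piW hmem (gword hmem l) = wprod (l.map Subtype.val) := by
  induction l with
  | nil => simp [gword_nil, wprod]
  | cons a l ih =>
    rw [gword_cons, map_mul, piW_of, ih, List.map_cons, wprod_cons]

lemma gword_reverse (l : List {x // x ∈ Φ}) :
    gword hmem l.reverse = (gword hmem l)⁻¹ := by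
  induction l with
  | nil => simp [gword_nil]
  | cons a l ih =>
    rw [List.reverse_cons, gword_append, gword_cons, ih, gword_nil, mul_one, gword_cons,
      mul_inv_rev, ginv]

lemma wprod_mem_phi (hΦ : IsRootSystem Φ) (l : List {x // x ∈ Φ}) {v : V} (hv : v ∈ Φ) :
    wprod (l.map Subtype.val) v ∈ Φ := by
  induction l with
  | nil => exact hv
  | cons a l ih =>
    rw [List.map_cons, wprod_cons, lmul_apply]
    exact rfln_mem hΦ a.2 ih

lemma gconj_word (hΦ : IsRootSystem Φ) (l : List {x // x ∈ Φ}) (b : {x // x ∈ Φ}) :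
    gword hmem l * PresentedGroup.of b * (gword hmem l)⁻¹ =
    PresentedGroup.of (⟨wprod (l.map Subtype.val) (b : V),
      wprod_mem_phi hΦ l b.2⟩ : {x // x ∈ Φ}) := by
  induction l with
  | nil =>
    rw [gword_nil]
    simp only [one_mul, inv_one, mul_one]
    exact congrArg PresentedGroup.of (Subtype.ext rfl)
  | cons a l ih =>
    rw [gword_cons, mul_inv_rev, ginv]
    have h1 : PresentedGroup.of (rels := Wrels Φ hmem) a * gword hmem l *
        PresentedGroup.of b * ((gword hmem l)⁻¹ * PresentedGroup.of a) =
        PresentedGroup.of a * (gword hmem l * PresentedGroup.of b * (gword hmem l)⁻¹) *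
          PresentedGroup.of a := by group
    rw [h1, ih]
    have h2 := gconj hmem a ⟨wprod (l.map Subtype.val) (b : V), wprod_mem_phi hΦ l b.2⟩
    rw [ginv] at h2
    rw [h2]
    exact congrArg PresentedGroup.of (Subtype.ext (by
      simp only [List.map_cons, wprod_cons, lmul_apply]))

lemma exists_gword (g : PresentedGroup (Wrels Φ hmem)) :
    ∃ l : List {x // x ∈ Φ}, gword hmem l = g := by
  induction g using PresentedGroup.induction_on with
  | H z =>
    induction z using FreeGroup.induction_on with
    | C1 => exact ⟨[], by rw [gword_nil, map_one]⟩
    | of x => exact ⟨[x], by rw [gword_singleton]; rfl⟩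
    | inv_of x _ =>
      refine ⟨[x], ?_⟩
      rw [gword_singleton, map_inv]
      exact (ginv hmem x).symm ▸ rfl
    | mul x y hx hy =>
      obtain ⟨lx, hlx⟩ := hx
      obtain ⟨ly, hly⟩ := hy
      exact ⟨lx ++ ly, by rw [gword_append, hlx, hly, map_mul]⟩

lemma lift_list (l0 : List V) (h : ∀ x ∈ l0, x ∈ Φ) :
    ∃ lS : List {x // x ∈ Φ}, lS.map Subtype.val = l0 := by
  induction l0 with
  | nil => exact ⟨[], rfl⟩
  | cons a l ih =>
    obtain ⟨lS, hlS⟩ := ih (fun x hx => h x (List.mem_cons_of_mem a hx))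
    exact ⟨⟨a, h a List.mem_cons_self⟩ :: lS, by rw [List.map_cons, hlS]⟩

variable {f : V}

lemma of_pos_simple (hΦ : IsRootSystem Φ) (hf : ∀ α ∈ Φ, (inner ℝ f α : ℝ) ≠ 0)
    (a : {x // x ∈ Φ}) (hpos : (a : V) ∈ PosR Φ f) :
    ∃ l : List {x // x ∈ Φ}, (∀ x ∈ l, (x : V) ∈ DeltaF Φ f) ∧
      gword hmem l = PresentedGroup.of a := by
  obtain ⟨l0, hl0, b, hb, hwp⟩ := exists_conj_simple hf hΦ (msr Φ f a) (a : V) hpos rfl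
  obtain ⟨lS, hlS⟩ := lift_list l0
    (fun x hx => PosR_subset (DeltaF_subset (hl0 x hx)))
  set bS : {x // x ∈ Φ} := ⟨b, PosR_subset (DeltaF_subset hb)⟩ with hbS
  refine ⟨lS ++ [bS] ++ lS.reverse, ?_, ?_⟩
  · intro x hx
    rcases List.mem_append.mp hx with hx | hx
    · rcases List.mem_append.mp hx with hx | hx
      · exact hl0 x (hlS ▸ List.mem_map_of_mem (f := Subtype.val) hx)
      · rw [List.mem_singleton.mp hx, hbS]; exact hb
    · exact hl0 x (hlS ▸ List.mem_map_of_mem (f := Subtype.val) (List.mem_reverse.mp hx))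
  · rw [gword_append, gword_append, gword_reverse, gword_singleton]
    have := gconj_word hmem hΦ lS bS
    rw [this]
    refine congrArg PresentedGroup.of (Subtype.ext ?_)
    show wprod (lS.map Subtype.val) (bS : V) = (a : V)
    rw [hlS, hbS]
    exact hwp

lemma of_simple (hΦ : IsRootSystem Φ) (hf : ∀ α ∈ Φ, (inner ℝ f α : ℝ) ≠ 0)
    (a : {x // x ∈ Φ}) :
    ∃ l : List {x // x ∈ Φ}, (∀ x ∈ l, (x : V) ∈ DeltaF Φ f) ∧
      gword hmem l = PresentedGroup.of a := by
  rcases pos_or_neg_mem hf hΦ a.2 with hpos | hneg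
  · exact of_pos_simple hmem hΦ hf a hpos
  · have hofeq : PresentedGroup.of (rels := Wrels Φ hmem) a =
        PresentedGroup.of ⟨rfln (a : V) (a : V), hmem a a⟩ := by
      have := gconj hmem a a
      rw [← this]
      group
    have hcoe : (⟨rfln (a : V) (a : V), hmem a a⟩ : {x // x ∈ Φ}) =
        ⟨-(a : V), neg_mem hΦ a.2⟩ := Subtype.ext (rfln_self _)
    obtain ⟨l, hl, he⟩ := of_pos_simple hmem hΦ hf ⟨-(a : V), neg_mem hΦ a.2⟩ hneg
    exact ⟨l, hl, by rw [he, hofeq, hcoe]⟩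

lemma scan (hΦ : IsRootSystem Φ) (hf : ∀ α ∈ Φ, (inner ℝ f α : ℝ) ≠ 0) :
    ∀ (u : List {x // x ∈ Φ}) (c : {x // x ∈ Φ}),
    (∀ x ∈ u, (x : V) ∈ DeltaF Φ f) → (c : V) ∈ DeltaF Φ f →
    wprod (u.map Subtype.val) (c : V) ∉ PosR Φ f →
    ∃ p d s, u = p ++ d :: s ∧ wprod (s.map Subtype.val) (c : V) ∈ PosR Φ f ∧
      rfln (d : V) (wprod (s.map Subtype.val) (c : V)) ∉ PosR Φ f := by
  intro u
  induction u with
  | nil =>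
    intro c _ hc hneg
    exact absurd (DeltaF_subset hc) hneg
  | cons d s ih =>
    intro c hu hc hneg
    by_cases h : wprod (s.map Subtype.val) (c : V) ∈ PosR Φ f
    · refine ⟨[], d, s, rfl, h, ?_⟩
      rw [List.map_cons, wprod_cons, lmul_apply] at hneg
      exact hneg
    · obtain ⟨p, d', s', hu', h1, h2⟩ :=
        ih c (fun x hx => hu x (List.mem_cons_of_mem d hx)) hc h
      exact ⟨d :: p, d', s', by rw [hu', List.cons_append], h1, h2⟩

lemma deletion (hΦ : IsRootSystem Φ) (hf : ∀ α ∈ Φ, (inner ℝ f α : ℝ) ≠ 0) :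
    ∀ n (l : List {x // x ∈ Φ}), (∀ x ∈ l, (x : V) ∈ DeltaF Φ f) → l.length = n →
    wprod (l.map Subtype.val) = 1 → gword hmem l = 1 := by
  intro n
  induction n using Nat.strong_induction_on with
  | _ n ih =>
    intro l hl hlen hw
    rcases List.eq_nil_or_concat l with rfl | ⟨t, c, rfl⟩
    · exact gword_nil hmem
    · rw [List.concat_eq_append] at hl hlen hw ⊢
      have hc : (c : V) ∈ DeltaF Φ f := hl c (by simp)
      have ht : ∀ x ∈ t, (x : V) ∈ DeltaF Φ f := fun x hx => hl x (by simp [hx])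
      have hwt : wprod (t.map Subtype.val) = rfln (c : V) := by
        rw [List.map_append, wprod_append, List.map_singleton] at hw
        have h1 : wprod [(c : V)] = rfln (c : V) := by
          rw [show [(c:V)] = (c:V) :: [] from rfl, wprod_cons, wprod_nil, mul_one]
        rw [h1] at hw
        have := congrArg (fun z => z * rfln (c : V)) hw
        simp only [one_mul] at this
        rw [mul_assoc, rfln_mul_self, mul_one] at this
        exact this
      have hneg : wprod (t.map Subtype.val) (c : V) ∉ PosR Φ f := by
        rw [hwt, rfln_self]
        exact not_both_pos (DeltaF_subset hc)
      obtain ⟨p, d, s, ht', hsp, hsn⟩ := scan hΦ hf t c ht hc hneg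
      subst ht'
      have hd : (d : V) ∈ DeltaF Φ f := ht d (by simp)
      have hδd : wprod (s.map Subtype.val) (c : V) = (d : V) := by
        by_contra hne
        exact hsn (simple_reflect_pos hf hΦ hd hsp hne)
      -- the commutation relations
      have hG : PresentedGroup.of (rels := Wrels Φ hmem) d * gword hmem s =
          gword hmem s * PresentedGroup.of c := by
        have h0 := gconj_word hmem hΦ s c
        rw [show (⟨wprod (s.map Subtype.val) (c : V), wprod_mem_phi hΦ s c.2⟩ :
          {x // x ∈ Φ}) = d from Subtype.ext hδd] at h0
        rw [← h0]
        group
      have hW : rfln (d : V) * wprod (s.map Subtype.val) =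
          wprod (s.map Subtype.val) * rfln (c : V) := by
        have h0 := rfln_conj (s.map Subtype.val) (c : V)
        rw [hδd] at h0
        rw [h0]
        group
      -- the shorter word
      have hlen2 : (p ++ s).length + 2 = n := by
        simp only [List.length_append, List.length_cons, List.length_nil] at hlen ⊢
        omega
      have hmem2 : ∀ x ∈ p ++ s, (x : V) ∈ DeltaF Φ f := by
        intro x hx
        rcases List.mem_append.mp hx with hx | hx
        · exact ht x (by simp [hx])
        · exact ht x (by simp [hx])
      have hw2 : wprod ((p ++ s).map Subtype.val) = 1 := by
        have hexp : wprod (((p ++ d :: s) ++ [c]).map Subtype.val) =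
            wprod (p.map Subtype.val) * (rfln (d : V) * wprod (s.map Subtype.val)) *
              rfln (c : V) := by
          rw [List.map_append, wprod_append, List.map_append, wprod_append, List.map_cons,
            wprod_cons, List.map_singleton,
            show [(c:V)] = (c:V) :: [] from rfl, wprod_cons, wprod_nil, mul_one, mul_assoc]
        rw [hexp, hW] at hw
        calc wprod ((p ++ s).map Subtype.val)
            = wprod (p.map Subtype.val) * wprod (s.map Subtype.val) := by
              rw [List.map_append, wprod_append]
          _ = wprod (p.map Subtype.val) * (wprod (s.map Subtype.val) * rfln (c:V)) *
                rfln (c:V) := by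
              rw [mul_assoc (wprod (p.map Subtype.val)), mul_assoc (wprod (s.map Subtype.val)),
                rfln_mul_self, mul_one]
          _ = 1 := hw
      have hgw2 := ih _ (by omega) (p ++ s) hmem2 rfl hw2
      -- conclude
      have hfin : gword hmem ((p ++ d :: s) ++ [c]) =
          gword hmem (p ++ s) * (PresentedGroup.of c * PresentedGroup.of c) := by
        rw [gword_append, gword_append, gword_cons, gword_singleton, gword_append]
        rw [← mul_assoc, mul_assoc (gword hmem p), hG]
        group
      rw [hfin, hgw2, gsq, one_mul]

lemma piW_eq_one (hΦ : IsRootSystem Φ) (hf : ∀ α ∈ Φ, (inner ℝ f α : ℝ) ≠ 0)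
    (g : PresentedGroup (Wrels Φ hmem)) (hg : piW hmem g = 1) : g = 1 := by
  obtain ⟨l, rfl⟩ := exists_gword hmem g
  have h : ∀ l : List {x // x ∈ Φ}, ∃ L : List {x // x ∈ Φ},
      (∀ x ∈ L, (x : V) ∈ DeltaF Φ f) ∧ gword hmem L = gword hmem l := by
    intro l
    induction l with
    | nil => exact ⟨[], by simp, rfl⟩
    | cons a l ih =>
      obtain ⟨L1, h1, e1⟩ := of_simple hmem hΦ hf a
      obtain ⟨L2, h2, e2⟩ := ih
      refine ⟨L1 ++ L2, ?_, ?_⟩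
      · intro x hx
        rcases List.mem_append.mp hx with h | h
        exacts [h1 x h, h2 x h]
      · rw [gword_append, e1, e2, gword_cons]
  obtain ⟨L, hL, he⟩ := h l
  rw [← he] at hg ⊢
  have hw : wprod (L.map Subtype.val) = 1 := by rw [← piW_gword]; exact hg
  exact deletion hmem hΦ hf L.length L hL rfl hw

end Pres

theorem stmt3' (Φ : Finset V) (hΦ : IsRootSystem Φ)
    (hmem : ∀ a b : {x // x ∈ Φ}, rfln (a : V) (b : V) ∈ Φ) :
    Nonempty
      ((Subgroup.closure {w : V ≃ₗ[ℝ] V | ∃ α ∈ Φ, w = rfln α}) ≃*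
        PresentedGroup (Wrels Φ hmem)) := by
  obtain ⟨f, hf⟩ := exists_regular Φ hΦ.ne_zero
  set W := Subgroup.closure {w : V ≃ₗ[ℝ] V | ∃ α ∈ Φ, w = rfln α} with hWdef
  have hwl : ∀ l : List {x // x ∈ Φ}, wprod (l.map Subtype.val) ∈ W := by
    intro l
    induction l with
    | nil => exact one_mem W
    | cons a l ih =>
      rw [List.map_cons, wprod_cons]
      exact mul_mem (Subgroup.subset_closure ⟨(a : V), a.2, rfl⟩) ih
  have hrange : ∀ g : PresentedGroup (Wrels Φ hmem), piW hmem g ∈ W := by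
    intro g
    obtain ⟨l, rfl⟩ := exists_gword hmem g
    rw [piW_gword]
    exact hwl l
  set π' : PresentedGroup (Wrels Φ hmem) →* W :=
    (piW hmem).codRestrict W hrange with hπ'
  have hinj : Function.Injective π' := by
    rw [injective_iff_map_eq_one]
    intro g hg
    apply piW_eq_one hmem hΦ hf g
    have := congrArg (Subtype.val : W → (V ≃ₗ[ℝ] V)) hg
    exact this
  have hsurj : Function.Surjective π' := by
    rintro ⟨w, hw⟩
    have : ∃ g : PresentedGroup (Wrels Φ hmem), piW hmem g = w := by
      refine Subgroup.closure_induction ?_ ?_ ?_ ?_ hw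
      · rintro x ⟨α, hα, rfl⟩
        exact ⟨PresentedGroup.of ⟨α, hα⟩, piW_of hmem ⟨α, hα⟩⟩
      · exact ⟨1, map_one _⟩
      · rintro x y hx hy ⟨g1, hg1⟩ ⟨g2, hg2⟩
        exact ⟨g1 * g2, by rw [map_mul, hg1, hg2]⟩
      · rintro x hx ⟨g, hg⟩
        exact ⟨g⁻¹, by rw [map_inv, hg]⟩
    obtain ⟨g, hg⟩ := this
    exact ⟨g, Subtype.ext hg⟩
  exact ⟨(MulEquiv.ofBijective π' ⟨hinj, hsurj⟩).symm⟩

/-- The Weyl group of a root system `Φ` (the group generated by the reflections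
`ω_α`, `α ∈ Φ`) is isomorphic to the abstract group generated by symbols `ω_α`
for `α ∈ Φ` subject to the relations `ω_α² = 1` and
`ω_α ω_β ω_α⁻¹ = ω_{ω_α(β)}`, where `ω_α(β) = β − ⟨β,α⟩α`. -/
theorem stmt3 (Φ : Finset V) (hΦ : IsRootSystem Φ)
    (hmem : ∀ a b : {x // x ∈ Φ}, rfln (a : V) (b : V) ∈ Φ) :
    Nonempty
      ((Subgroup.closure {w : V ≃ₗ[ℝ] V | ∃ α ∈ Φ, w = rfln α}) ≃*
        PresentedGroup
          ({w : FreeGroup {x // x ∈ Φ} | ∃ a : {x // x ∈ Φ}, w = (FreeGroup.of a) ^ 2} ∪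
           {w : FreeGroup {x // x ∈ Φ} | ∃ a b : {x // x ∈ Φ},
             w = FreeGroup.of a * FreeGroup.of b * (FreeGroup.of a)⁻¹ *
               (FreeGroup.of (⟨rfln (a : V) (b : V), hmem a b⟩ : {x // x ∈ Φ}))⁻¹})) := by
  exact stmt3' Φ hΦ hmem
end

section
/- Let G be a group with subgroups B and N forming a BN-pair (Tits system) with Weyl group W = N/(B∩N) generated by the set S of simple reflections. Then G admits the Bruhat decomposition: G is the disjoint union over w ∈ W of the double cosets B·ẇ·B, where ẇ ∈ N is any representative of w; moreover BẇB = Bẇ'B if and only if w = w' in W. -/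
variable {G : Type*} [Group G]

/-- The `(B,B)`-double coset of `g`. -/
def DC (B : Subgroup G) (g : G) : Set G := {x | ∃ b ∈ B, ∃ b' ∈ B, x = b * g * b'}

/-- The hypotheses of a Tits system (BN-pair): `B` and `N` generate `G`,
`H = B ⊓ N` is normal in `N`, the Weyl group `W = N/H` is generated by the set `S`
of involutions, `sBw ⊆ BswB ∪ BwB`, and `sBs ≠ B` for `s ∈ S`. -/
structure IsBNPair (B N : Subgroup G) (S : Set G) : Prop where
  gen : Subgroup.closure ((B : Set G) ∪ (N : Set G)) = ⊤
  hnorm : ∀ n ∈ N, ∀ h ∈ B ⊓ N, n * h * n⁻¹ ∈ B ⊓ N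
  s_mem : S ⊆ (N : Set G)
  s_sq : ∀ s ∈ S, s * s ∈ B ⊓ N
  s_ne : ∀ s ∈ S, s ∉ B
  w_gen : (N : Set G) ⊆ ↑(Subgroup.closure (S ∪ (↑(B ⊓ N) : Set G)))
  t3 : ∀ s ∈ S, ∀ n ∈ N, ∀ b ∈ B, s * b * n ∈ DC B (s * n) ∪ DC B n
  t4 : ∀ s ∈ S, ∃ b ∈ B, s * b * s⁻¹ ∉ B

namespace BNaux


lemma mem_DC_self (B : Subgroup G) (g : G) : g ∈ DC B g :=
  ⟨1, one_mem _, 1, one_mem _, by group⟩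

lemma DC_eq_of_mem {B : Subgroup G} {g x : G} (hx : x ∈ DC B g) : DC B x = DC B g := by
  obtain ⟨b, hb, b', hb', rfl⟩ := hx
  ext y
  constructor
  · rintro ⟨c, hc, c', hc', rfl⟩
    exact ⟨c * b, mul_mem hc hb, b' * c', mul_mem hb' hc', by group⟩
  · rintro ⟨c, hc, c', hc', rfl⟩
    exact ⟨c * b⁻¹, mul_mem hc (inv_mem hb), b'⁻¹ * c', mul_mem (inv_mem hb') hc', by group⟩

lemma DC_mul_mem {B : Subgroup G} {g x b b' : G} (hb : b ∈ B) (hb' : b' ∈ B)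
    (hx : x ∈ DC B g) : b * x * b' ∈ DC B g := by
  obtain ⟨c, hc, c', hc', rfl⟩ := hx
  exact ⟨b * c, mul_mem hb hc, c' * b', mul_mem hc' hb', by group⟩

lemma DC_of_mem_B {B : Subgroup G} {g : G} (hg : g ∈ B) : DC B g = (B : Set G) := by
  ext x
  constructor
  · rintro ⟨b, hb, b', hb', rfl⟩
    exact mul_mem (mul_mem hb hg) hb'
  · intro hx
    exact ⟨x * g⁻¹, mul_mem hx (inv_mem hg), 1, one_mem _, by group⟩

/-- Representation of `n` as a product of `k` elements of `S` times an element of `H`. -/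
def Rep (S : Set G) (H : Subgroup G) (n : G) (k : ℕ) : Prop :=
  ∃ l : List G, (∀ x ∈ l, x ∈ S) ∧ l.length = k ∧ ∃ t ∈ H, n = l.prod * t

variable {B N : Subgroup G} {S : Set G}

lemma conj_mem (h : IsBNPair B N S) {s t : G} (hs : s ∈ S) (ht : t ∈ B ⊓ N) :
    s⁻¹ * t * s ∈ B ⊓ N := by
  have := h.hnorm s⁻¹ (inv_mem (h.s_mem hs)) t ht
  simpa using this

lemma push (h : IsBNPair B N S) :
    ∀ l : List G, (∀ x ∈ l, x ∈ S) → ∀ t ∈ B ⊓ N, ∃ t' ∈ B ⊓ N, t * l.prod = l.prod * t' := by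
  intro l
  induction l with
  | nil => exact fun _ t ht => ⟨t, ht, by simp⟩
  | cons s tl ih =>
    intro hl t ht
    have hs : s ∈ S := hl s (List.mem_cons_self)
    obtain ⟨t', ht', heq⟩ := ih (fun x hx => hl x (List.mem_cons_of_mem s hx))
      (s⁻¹ * t * s) (conj_mem h hs ht)
    refine ⟨t', ht', ?_⟩
    have : t * s = s * (s⁻¹ * t * s) := by group
    calc t * (s :: tl).prod = s * ((s⁻¹ * t * s) * tl.prod) := by
          rw [List.prod_cons]; group
      _ = s * (tl.prod * t') := by rw [heq]
      _ = (s :: tl).prod * t' := by rw [List.prod_cons]; group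

lemma inv_rep (h : IsBNPair B N S) :
    ∀ l : List G, (∀ x ∈ l, x ∈ S) →
      ∃ l' : List G, (∀ x ∈ l', x ∈ S) ∧ l'.length = l.length ∧
        ∃ t ∈ B ⊓ N, l.prod⁻¹ = l'.prod * t := by
  intro l
  induction l with
  | nil => exact fun _ => ⟨[], by simp, by simp, 1, one_mem _, by simp⟩
  | cons s tl ih =>
    intro hl
    have hs : s ∈ S := hl s (List.mem_cons_self)
    obtain ⟨l', hl', hlen, t, ht, heq⟩ := ih (fun x hx => hl x (List.mem_cons_of_mem s hx))
    have hss : s * s ∈ B ⊓ N := h.s_sq s hs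
    -- (s * tl.prod)⁻¹ = tl.prod⁻¹ * s⁻¹ = l'.prod * t * (s*s)⁻¹ * s
    --   = l'.prod * s * (s⁻¹ * (t * (s*s)⁻¹) * s)
    refine ⟨l' ++ [s], ?_, by simp [hlen], s⁻¹ * (t * (s * s)⁻¹) * s,
      conj_mem h hs (mul_mem ht (inv_mem hss)), ?_⟩
    · intro x hx
      rcases List.mem_append.mp hx with hx | hx
      · exact hl' x hx
      · simp at hx; subst hx; exact hs
    · rw [List.prod_cons, List.prod_append]
      simp only [List.prod_cons, List.prod_nil]
      rw [mul_inv_rev, heq]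
      group

lemma rep_exists' (h : IsBNPair B N S) {g : G}
    (hmem : g ∈ Subgroup.closure (S ∪ ((B ⊓ N : Subgroup G) : Set G))) :
    ∃ k, Rep S (B ⊓ N) g k := by
  induction hmem using Subgroup.closure_induction with
  | mem x hx =>
    rcases hx with hx | hx
    · exact ⟨1, [x], by simpa using hx, by simp, 1, one_mem _, by simp⟩
    · exact ⟨0, [], by simp, by simp, x, hx, by simp⟩
  | one => exact ⟨0, [], by simp, by simp, 1, one_mem _, by simp⟩
  | mul x y hx hy ihx ihy =>
    obtain ⟨k, l, hl, hlen, t, ht, rfl⟩ := ihx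
    obtain ⟨k', l', hl', hlen', t', ht', rfl⟩ := ihy
    obtain ⟨t'', ht'', heq⟩ := push h l' hl' t ht
    refine ⟨k + k', l ++ l', ?_, by simp [hlen, hlen'], t'' * t', mul_mem ht'' ht', ?_⟩
    · intro x hx
      rcases List.mem_append.mp hx with hx | hx
      exacts [hl x hx, hl' x hx]
    · rw [List.prod_append]
      calc l.prod * t * (l'.prod * t') = l.prod * (t * l'.prod) * t' := by group
        _ = l.prod * (l'.prod * t'') * t' := by rw [heq]
        _ = l.prod * l'.prod * (t'' * t') := by group
  | inv x hx ihx =>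
    obtain ⟨k, l, hl, hlen, t, ht, rfl⟩ := ihx
    obtain ⟨l', hl', hlen', t', ht', heq⟩ := inv_rep h l hl
    obtain ⟨t'', ht'', heq2⟩ := push h l' hl' t⁻¹ (inv_mem ht)
    refine ⟨k, l', hl', hlen' ▸ hlen, t'' * t', mul_mem ht'' ht', ?_⟩
    calc (l.prod * t)⁻¹ = t⁻¹ * l.prod⁻¹ := by group
      _ = t⁻¹ * (l'.prod * t') := by rw [heq]
      _ = (t⁻¹ * l'.prod) * t' := by group
      _ = (l'.prod * t'') * t' := by rw [heq2]
      _ = l'.prod * (t'' * t') := by group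

lemma rep_exists (h : IsBNPair B N S) {n : G} (hn : n ∈ N) :
    ∃ k, Rep S (B ⊓ N) n k :=
  rep_exists' h (h.w_gen hn)


/-- Key multiplication lemma: `n * b * n'` lies in some double coset `B n'' B`. -/
lemma mul_DC (h : IsBNPair B N S) :
    ∀ k : ℕ, ∀ n : G, Rep S (B ⊓ N) n k → ∀ b ∈ B, ∀ n' ∈ N,
      ∃ n'' ∈ N, n * b * n' ∈ DC B n'' := by
  intro k
  induction k with
  | zero =>
    rintro n ⟨l, hl, hlen, t, ht, rfl⟩ b hb n' hn'
    rw [List.length_eq_zero_iff] at hlen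
    subst hlen
    simp only [List.prod_nil, one_mul]
    exact ⟨n', hn', t * b, mul_mem (Subgroup.mem_inf.mp ht).1 hb, 1, one_mem _, by group⟩
  | succ k ih =>
    rintro n ⟨l, hl, hlen, t, ht, rfl⟩ b hb n' hn'
    cases l with
    | nil => simp at hlen
    | cons s tl =>
      have hs : s ∈ S := hl s (List.mem_cons_self)
      set m := tl.prod * t with hm
      have hrepm : Rep S (B ⊓ N) m k :=
        ⟨tl, fun x hx => hl x (List.mem_cons_of_mem s hx), by simpa using hlen, t, ht, rfl⟩
      obtain ⟨n'', hn'', b₁, hb₁, b₂, hb₂, heq⟩ := ih m hrepm b hb n' hn'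
      have hkey := h.t3 s hs n'' hn'' b₁ hb₁
      have hprod : (s :: tl).prod * t * b * n' = s * (b₁ * n'' * b₂) := by
        rw [List.prod_cons, ← heq, hm]; group
      rcases hkey with hk | hk
      · refine ⟨s * n'', mul_mem (h.s_mem hs) hn'', ?_⟩
        rw [hprod]
        have : s * (b₁ * n'' * b₂) = 1 * (s * b₁ * n'') * b₂ := by group
        rw [this]
        exact DC_mul_mem (one_mem _) hb₂ hk
      · refine ⟨n'', hn'', ?_⟩
        rw [hprod]
        have : s * (b₁ * n'' * b₂) = 1 * (s * b₁ * n'') * b₂ := by group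
        rw [this]
        exact DC_mul_mem (one_mem _) hb₂ hk

lemma bruhat_exists (h : IsBNPair B N S) (g : G) : ∃ n ∈ N, g ∈ DC B n := by
  have hg : g ∈ Subgroup.closure ((B : Set G) ∪ (N : Set G)) := by
    rw [h.gen]; trivial
  induction hg using Subgroup.closure_induction with
  | mem x hx =>
    rcases hx with hx | hx
    · exact ⟨1, one_mem _, x, hx, 1, one_mem _, by group⟩
    · exact ⟨x, hx, mem_DC_self B x⟩
  | one => exact ⟨1, one_mem _, mem_DC_self B 1⟩
  | mul x y hx hy ihx ihy =>
    obtain ⟨n₁, hn₁, b, hb, b', hb', rfl⟩ := ihx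
    obtain ⟨n₂, hn₂, c, hc, c', hc', rfl⟩ := ihy
    obtain ⟨k, hk⟩ := rep_exists h hn₁
    obtain ⟨n'', hn'', hmem⟩ := mul_DC h k n₁ hk (b' * c) (mul_mem hb' hc) n₂ hn₂
    refine ⟨n'', hn'', ?_⟩
    have : b * n₁ * b' * (c * n₂ * c') = b * (n₁ * (b' * c) * n₂) * c' := by group
    rw [this]
    exact DC_mul_mem hb hc' hmem
  | inv x hx ihx =>
    obtain ⟨n, hn, b, hb, b', hb', rfl⟩ := ihx
    exact ⟨n⁻¹, inv_mem hn, b'⁻¹, inv_mem hb', b⁻¹, inv_mem hb, by group⟩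


lemma uniq (h : IsBNPair B N S) :
    ∀ k : ℕ, ∀ n ∈ N, ∀ n' ∈ N,
      Rep S (B ⊓ N) n k → (∀ j, Rep S (B ⊓ N) n j → k ≤ j) →
      (∀ j, Rep S (B ⊓ N) n' j → k ≤ j) →
      DC B n = DC B n' → n⁻¹ * n' ∈ B ⊓ N := by
  intro k
  induction k using Nat.strong_induction_on with
  | _ k ih =>
    intro n hn n' hn' hrep hmin hmin' hDC
    classical
    match k, hrep, hmin, hmin', ih with
    | 0, ⟨l, hl, hlen, t, ht, hne⟩, hmin, hmin', ih =>
      rw [List.length_eq_zero_iff] at hlen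
      subst hlen
      simp only [List.prod_nil, one_mul] at hne
      have hnH : n ∈ B ⊓ N := hne ▸ ht
      have hB : DC B n = (B : Set G) := DC_of_mem_B (Subgroup.mem_inf.mp hnH).1
      have hn'B : n' ∈ B := by
        have : n' ∈ DC B n' := mem_DC_self B n'
        rw [← hDC, hB] at this
        exact this
      exact mul_mem (inv_mem hnH) (Subgroup.mem_inf.mpr ⟨hn'B, hn'⟩)
    | (k + 1), ⟨l, hl, hlen, t, ht, hne⟩, hmin, hmin', ih =>
      cases l with
      | nil => simp at hlen
      | cons s tl =>
        have hs : s ∈ S := hl s (List.mem_cons_self)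
        have hsN : s ∈ N := h.s_mem hs
        set m := tl.prod * t with hm
        have hnm : n = s * m := by rw [hm, hne, List.prod_cons]; group
        have hmN : m ∈ N := by
          have : m = s⁻¹ * n := by rw [hnm]; group
          rw [this]; exact mul_mem (inv_mem hsN) hn
        have hrepm : Rep S (B ⊓ N) m k :=
          ⟨tl, fun x hx => hl x (List.mem_cons_of_mem s hx), by simpa using hlen, t, ht, rfl⟩
        have hssB : (s * s)⁻¹ ∈ B := inv_mem (Subgroup.mem_inf.mp (h.s_sq s hs)).1
        -- m belongs to DC B (s n') ∪ DC B n'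
        obtain ⟨b, hb, b', hb', hneq⟩ : n ∈ DC B n' := by
          rw [← hDC]; exact mem_DC_self B n
        have hmdec : m = (s * s)⁻¹ * (s * b * n') * b' := by
          have : m = s⁻¹ * n := by rw [hnm]; group
          rw [this, hneq]; group
        have hmem : m ∈ DC B (s * n') ∪ DC B n' := by
          rcases h.t3 s hs n' hn' b hb with hk | hk
          · left; rw [hmdec]; exact DC_mul_mem hssB hb' hk
          · right; rw [hmdec]; exact DC_mul_mem hssB hb' hk
        -- minimal length of m
        have hex_m := rep_exists h hmN
        set jm := Nat.find hex_m with hjm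
        have hjm_spec : Rep S (B ⊓ N) m jm := Nat.find_spec hex_m
        have hjm_min : ∀ j, Rep S (B ⊓ N) m j → jm ≤ j := fun j hj => Nat.find_min' hex_m hj
        have hjm_le : jm ≤ k := hjm_min k hrepm
        rcases hmem with hk1 | hk2
        · -- m ∈ DC B (s * n') : the main case
          set p := s * n' with hp
          have hpN : p ∈ N := mul_mem hsN hn'
          have hDCm : DC B m = DC B p := DC_eq_of_mem hk1
          have hex_p := rep_exists h hpN
          set jp := Nat.find hex_p with hjp
          have hjp_spec : Rep S (B ⊓ N) p jp := Nat.find_spec hex_p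
          have hjp_min : ∀ j, Rep S (B ⊓ N) p j → jp ≤ j := fun j hj => Nat.find_min' hex_p hj
          have hmp : m⁻¹ * p ∈ B ⊓ N := by
            by_cases hle : jm ≤ jp
            · exact ih jm (Nat.lt_succ_of_le hjm_le) m hmN p hpN hjm_spec hjm_min
                (fun j hj => le_trans hle (hjp_min j hj)) hDCm
            · have hlt : jp < jm := lt_of_not_ge hle
              have := ih jp (Nat.lt_succ_of_le (le_trans (le_of_lt hlt) hjm_le)) p hpN m hmN
                hjp_spec hjp_min (fun j hj => le_trans (le_of_lt hlt) (hjm_min j hj)) hDCm.symm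
              simpa using inv_mem this
          have hconj : m⁻¹ * (s * s)⁻¹ * m ∈ B ⊓ N := by
            have := h.hnorm m⁻¹ (inv_mem hmN) (s * s)⁻¹ (inv_mem (h.s_sq s hs))
            simpa using this
          have hfinal : n⁻¹ * n' = (m⁻¹ * (s * s)⁻¹ * m) * (m⁻¹ * p) := by
            rw [hnm, hp]; group
          rw [hfinal]
          exact mul_mem hconj hmp
        · -- m ∈ DC B n' : contradiction with minimality
          exfalso
          have hDCm : DC B m = DC B n' := DC_eq_of_mem hk2
          have hmn' : m⁻¹ * n' ∈ B ⊓ N :=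
            ih jm (Nat.lt_succ_of_le hjm_le) m hmN n' hn' hjm_spec hjm_min
              (fun j hj => le_trans (le_trans hjm_le (Nat.le_succ k)) (hmin' j hj)) hDCm
          -- then n' has a representation of length jm ≤ k < k+1
          obtain ⟨lm, hlm, hlmlen, tm, htm, hmeq⟩ := hjm_spec
          have hrepn' : Rep S (B ⊓ N) n' jm := by
            refine ⟨lm, hlm, hlmlen, tm * (m⁻¹ * n'), mul_mem htm hmn', ?_⟩
            rw [← mul_assoc, ← hmeq]; group
          have := hmin' jm hrepn'
          omega

end BNaux


open BNaux in
/-- Bruhat decomposition for a group with a BN-pair: `G` is the union of the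
double cosets `BẇB` over `w ∈ W = N/H`, and `BẇB = Bẇ'B` iff `w = w'` in `W`. -/
theorem stmt13 (B N : Subgroup G) (S : Set G) (h : IsBNPair B N S) :
    (∀ g : G, ∃ n ∈ N, g ∈ DC B n) ∧
    (∀ n ∈ N, ∀ n' ∈ N, (DC B n = DC B n' ↔ n⁻¹ * n' ∈ B ⊓ N)) := by
  classical
  refine ⟨bruhat_exists h, fun n hn n' hn' => ⟨fun hDC => ?_, fun hH => ?_⟩⟩
  · -- forward: equality of double cosets forces n ≡ n' mod H
    have hex_n := rep_exists h hn
    have hex_n' := rep_exists h hn'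
    set kn := Nat.find hex_n with hkn
    set kn' := Nat.find hex_n' with hkn'
    by_cases hle : kn ≤ kn'
    · exact uniq h kn n hn n' hn' (Nat.find_spec hex_n)
        (fun j hj => Nat.find_min' hex_n hj)
        (fun j hj => le_trans hle (Nat.find_min' hex_n' hj)) hDC
    · have hlt : kn' < kn := lt_of_not_ge hle
      have := uniq h kn' n' hn' n hn (Nat.find_spec hex_n')
        (fun j hj => Nat.find_min' hex_n' hj)
        (fun j hj => le_trans (le_of_lt hlt) (Nat.find_min' hex_n hj)) hDC.symm
      simpa using inv_mem this
  · -- backward: if n⁻¹ n' ∈ H ⊆ B then the double cosets agree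
    have hmem : n' ∈ DC B n :=
      ⟨1, one_mem _, n⁻¹ * n', (Subgroup.mem_inf.mp hH).1, by group⟩
    exact (DC_eq_of_mem hmem).symm
end
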